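/- arXiv:2010.07890 — 2 statements merged into one kernel-verified Lean document; each statement's English description precedes it below -/
import Mathlib

section
/- Let h be the arithmetic function h(n) = n for n ≥ 1 (with h(0) := 0). Let n, m ≥ 1 be integers and let μ be a partition of m. Then 𝓗(μ, n) = (∏_{k=0}^{|μ|+ℓ(μ)−1} (n − k)) · Σ_{λ ∈ Orb(μ)} ∏_{k=1}^{ℓ(λ)} (k + Σ_{i=1}^{k} λ_i)^{−1}. -/
open Finset Polynomial

/-- The recursively defined polynomials `P_n^{g,h}` attached to arithmetic functions
`g, h : ℕ → ℝ` (values at `0` are irrelevant): `P_0 = 1` and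
`P_n(x) = (x / h(n)) · Σ_{k=1}^n g(k) · P_{n-k}(x)`. -/
noncomputable def Ppoly (g h : ℕ → ℝ) : ℕ → Polynomial ℝ
  | 0 => 1
  | (n+1) => Polynomial.C (h (n+1))⁻¹ * Polynomial.X *
      ∑ k ∈ Finset.range (n+1), Polynomial.C (g (k+1)) * Ppoly g h (n - k)
  termination_by n => n
  decreasing_by simp_wf

/-- `A_{n,m}^{g,h}`: the coefficient of `x^m` in `(∏_{k=1}^n h(k)) · P_n^{g,h}(x)`. -/
noncomputable def Acoeff (g h : ℕ → ℝ) (n m : ℕ) : ℝ :=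
  (∏ k ∈ Finset.Icc 1 n, h k) * (Ppoly g h n).coeff m

/-- `h` extended by the convention `h(0) := 0`. -/
noncomputable def hExt (h : ℕ → ℝ) (n : ℕ) : ℝ := if n = 0 then 0 else h n

/-- `h_m(n) = ∏_{k=0}^{m-1} h(n-k)` (with the convention `h(0) := 0`). -/
noncomputable def hIter (h : ℕ → ℝ) (m n : ℕ) : ℝ :=
  ∏ k ∈ Finset.range m, hExt h (n - k)

/-- Helper for `H(μ,n)`: defined on reversed compositions, peeling off the head
(which is the last part `μ_{r+1}` of the original composition). -/
noncomputable def Hrev (h : ℕ → ℝ) : List ℕ → ℕ → ℝ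
  | [], _ => 1
  | (a :: t), n =>
      if n < (a :: t).sum + (a :: t).length then 0
      else ∑ k ∈ Finset.Ico ((a :: t).sum + (a :: t).length - 1) n,
        hIter h a k * Hrev h t (k - a)

/-- `H(μ, n)` for a composition `μ` (a list of positive integers): `H(ε,n) = 1`,
`H(μ,n) = Σ_{k=|μ|+ℓ(μ)-1}^{n-1} h_{μ_{r+1}}(k) · H((μ_1,…,μ_r), k - μ_{r+1})`
if `n ≥ |μ| + ℓ(μ)`, and `0` otherwise. -/
noncomputable def HFun (h : ℕ → ℝ) (μ : List ℕ) (n : ℕ) : ℝ := Hrev h μ.reverse n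

/-- `𝓗(μ, n) = Σ_{λ ∈ Orb(μ)} H(λ, n)`: sum over all distinct rearrangements of `μ`. -/
noncomputable def HCal (h : ℕ → ℝ) (μ : List ℕ) (n : ℕ) : ℝ :=
  ∑ lam ∈ μ.permutations.toFinset, HFun h lam n

/-- `𝓖(μ) = ∏_{k=1}^{ℓ(μ)} g(μ_k + 1)`. -/
noncomputable def GCal (g : ℕ → ℝ) (μ : List ℕ) : ℝ := (μ.map (fun p => g (p + 1))).prod

noncomputable def Crev : List ℕ → ℝ
  | [] => 1
  | (a :: t) => ((((a :: t).sum + (a :: t).length : ℕ) : ℝ))⁻¹ * Crev t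

lemma sumFall (M : ℕ) (n : ℕ) :
    ∑ k ∈ range n, ∏ j ∈ range M, ((k : ℝ) - j) =
      (∏ j ∈ range (M + 1), ((n : ℝ) - j)) / (M + 1) := by
  induction n with
  | zero =>
      simp only [range_zero, sum_empty]
      rw [Finset.prod_eq_zero (Finset.mem_range.mpr (Nat.succ_pos M))]
      · simp
      · simp
  | succ n ih =>
      rw [Finset.sum_range_succ, ih]
      have h1 : ∏ j ∈ range (M + 1), ((n : ℝ) - j)
          = (∏ j ∈ range M, ((n : ℝ) - j)) * ((n : ℝ) - M) := by
        rw [Finset.prod_range_succ]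
      have h2 : ∏ j ∈ range (M + 1), (((n : ℕ) + 1 : ℝ) - j)
          = (∏ j ∈ range M, ((n : ℝ) - j)) * ((n : ℝ) + 1) := by
        rw [Finset.prod_range_succ']
        congr 1
        · apply Finset.prod_congr rfl
          intro j _
          push_cast; ring
        · push_cast; ring
      have hM : ((M : ℝ) + 1) ≠ 0 := by positivity
      push_cast
      rw [h1, h2]
      field_simp
      ring

lemma hIter_id (a k : ℕ) :
    hIter (fun x => (x : ℝ)) a k = ∏ j ∈ range a, ((k : ℝ) - j) := by
  have hx : ∀ x : ℕ, hExt (fun x => (x : ℝ)) x = (x : ℝ) := by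
    intro x; simp [hExt]; intro h; simp [h]
  unfold hIter
  by_cases h : a ≤ k
  · apply Finset.prod_congr rfl
    intro j hj
    rw [hx]
    have : j ≤ k := le_trans (le_of_lt (Finset.mem_range.mp hj)) h
    push_cast [Nat.cast_sub this]
    ring
  · push_neg at h
    have L : ∏ j ∈ range a, hExt (fun x => (x : ℝ)) (k - j) = 0 :=
      Finset.prod_eq_zero (Finset.mem_range.mpr h) (by rw [hx]; simp)
    have R : ∏ j ∈ range a, ((k : ℝ) - j) = 0 :=
      Finset.prod_eq_zero (Finset.mem_range.mpr h) (by simp)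
    rw [L, R]

lemma hrev_eq : ∀ (t : List ℕ) (n : ℕ),
    Hrev (fun x => (x : ℝ)) t n =
      (∏ k ∈ range (t.sum + t.length), ((n : ℝ) - k)) * Crev t := by
  intro t
  induction t with
  | nil => intro n; simp [Hrev, Crev]
  | cons a t ih =>
      intro n
      have hS : (a :: t).sum = a + t.sum := by simp
      have hL : (a :: t).length = t.length + 1 := by simp
      set M : ℕ := a + (t.sum + t.length) with hM
      have hSL : (a :: t).sum + (a :: t).length = M + 1 := by
        rw [hS, hL]; omega
      by_cases hlt : n < (a :: t).sum + (a :: t).length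
      · rw [Hrev, if_pos hlt]
        rw [Finset.prod_eq_zero (Finset.mem_range.mpr hlt)]
        · simp
        · simp
      · push_neg at hlt
        rw [Hrev, if_neg (by omega)]
        have hstep : ∀ k ∈ Finset.Ico ((a :: t).sum + (a :: t).length - 1) n,
            hIter (fun x => (x : ℝ)) a k * Hrev (fun x => (x : ℝ)) t (k - a)
              = (∏ j ∈ range M, ((k : ℝ) - j)) * Crev t := by
          intro k hk
          obtain ⟨hk1, hk2⟩ := Finset.mem_Ico.mp hk
          have hak : a ≤ k := by omega
          rw [hIter_id, ih]
          have hcast : ((k - a : ℕ) : ℝ) = (k : ℝ) - a := by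
            push_cast [Nat.cast_sub hak]; ring
          have hcomb : (∏ j ∈ range a, ((k : ℝ) - j)) *
              (∏ j ∈ range (t.sum + t.length), (((k - a : ℕ) : ℝ) - j))
              = ∏ j ∈ range M, ((k : ℝ) - j) := by
            rw [hM]
            rw [Finset.prod_range_add (fun j => ((k : ℝ) - j)) a (t.sum + t.length)]
            congr 1
            apply Finset.prod_congr rfl
            intro j _
            rw [hcast]; push_cast; ring
          rw [← hcomb]; ring
        rw [Finset.sum_congr rfl hstep, ← Finset.sum_mul]
        have hIcoM : (a :: t).sum + (a :: t).length - 1 = M := by omega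
        have hMn : M ≤ n := by omega
        have hsum : ∑ k ∈ Finset.Ico ((a :: t).sum + (a :: t).length - 1) n,
            ∏ j ∈ range M, ((k : ℝ) - j)
            = ∑ k ∈ range n, ∏ j ∈ range M, ((k : ℝ) - j) := by
          rw [hIcoM]
          have hz : ∑ k ∈ Finset.range M, ∏ j ∈ range M, ((k : ℝ) - j) = 0 := by
            apply Finset.sum_eq_zero
            intro k hk
            exact Finset.prod_eq_zero hk (by simp)
          rw [← Finset.sum_range_add_sum_Ico _ hMn, hz, zero_add]
        rw [hsum, sumFall]
        rw [Crev]
        rw [hSL]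
        push_cast
        ring

lemma crev_rev (l : List ℕ) :
    Crev l.reverse = ∏ k ∈ Finset.Icc 1 l.length, ((k : ℝ) + ((l.take k).sum : ℝ))⁻¹ := by
  induction l using List.reverseRecOn with
  | nil => simp [Crev]
  | append_singleton l a ih =>
      rw [List.reverse_append]
      simp only [List.reverse_singleton, List.singleton_append]
      rw [Crev, ih]
      have hlen : (l ++ [a]).length = l.length + 1 := by simp
      rw [hlen, Finset.prod_Icc_succ_top (Nat.le_add_left 1 l.length), mul_comm]
      congr 1
      · apply Finset.prod_congr rfl
        intro k hk
        have hkl : k ≤ l.length := (Finset.mem_Icc.mp hk).2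
        rw [List.take_append_of_le_length hkl]
      · have ht : (l ++ [a]).take (l.length + 1) = l ++ [a] := by
          apply List.take_of_length_le; simp
        rw [ht]
        congr 1
        simp [List.sum_reverse, List.sum_append]
        ring


/-- For `h = id` and a partition `μ` of `m`:
`𝓗(μ, n) = ∏_{k=0}^{|μ|+ℓ(μ)-1}(n-k) · Σ_{λ ∈ Orb(μ)} ∏_{k=1}^{ℓ(λ)} (k + Σ_{i=1}^k λ_i)⁻¹`. -/
theorem HCal_h_id (n m : ℕ) (hn : 1 ≤ n) (hm : 1 ≤ m) (μ : Nat.Partition m) :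
    HCal (fun k => (k : ℝ)) μ.parts.toList n =
      (∏ k ∈ Finset.range (μ.parts.sum + Multiset.card μ.parts), ((n : ℝ) - (k : ℝ))) *
        ∑ lam ∈ μ.parts.toList.permutations.toFinset,
          ∏ k ∈ Finset.Icc 1 lam.length, ((k : ℝ) + ((lam.take k).sum : ℝ))⁻¹ := by
  unfold HCal
  rw [Finset.mul_sum]
  apply Finset.sum_congr rfl
  intro lam hlam
  have hperm : lam.Perm μ.parts.toList :=
    List.mem_permutations.mp (List.mem_toFinset.mp hlam)
  have hsum : lam.sum = μ.parts.sum := by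
    rw [hperm.sum_eq, Multiset.sum_toList]
  have hlen : lam.length = Multiset.card μ.parts := by
    rw [hperm.length_eq, Multiset.length_toList]
  unfold HFun
  rw [hrev_eq, crev_rev, List.sum_reverse, List.length_reverse, hsum, hlen]
end

section
/- Let h be a normalized non-vanishing arithmetic function, extended by h(0) := 0, and let 1 denote the constant arithmetic function 1(n) = 1. Then for every n ≥ 1, P_n^{1,h}(x) = (1/∏_{k=1}^{n} h(k)) · ∏_{k=0}^{n−1} (x + h(k)). -/
open Finset Polynomial

lemma sumP (h : ℕ → ℝ) (hnv : ∀ k, 1 ≤ k → h k ≠ 0) (n : ℕ) :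
    ∑ j ∈ Finset.range (n+1), Ppoly (fun _ => 1) h j =
      Polynomial.C (∏ k ∈ Finset.Icc 1 n, h k)⁻¹ *
        ∏ k ∈ Finset.Icc 1 n, (Polynomial.X + Polynomial.C (h k)) := by
  induction n with
  | zero => simp [Ppoly]
  | succ n ih =>
    rw [Finset.sum_range_succ, ih, Ppoly]
    have hre : ∑ k ∈ Finset.range (n+1),
        Polynomial.C ((fun _ => (1:ℝ)) (k+1)) * Ppoly (fun _ => 1) h (n - k)
        = ∑ j ∈ Finset.range (n+1), Ppoly (fun _ => 1) h j := by
      rw [← Finset.sum_range_reflect]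
      apply Finset.sum_congr rfl
      intro k hk
      simp only [Finset.mem_range] at hk
      simp only [map_one, one_mul]
      congr 1
      omega
    rw [hre, ih]
    rw [Finset.prod_Icc_succ_top (by omega : 1 ≤ n+1),
        Finset.prod_Icc_succ_top (by omega : 1 ≤ n+1)]
    have hb : h (n+1) ≠ 0 := hnv _ (by omega)
    have key : Polynomial.C (h (n+1))⁻¹ * Polynomial.C (h (n+1)) = 1 := by
      rw [← map_mul, inv_mul_cancel₀ hb, map_one]
    rw [mul_inv, map_mul]
    linear_combination (-(Polynomial.C (∏ k ∈ Finset.Icc 1 n, h k)⁻¹ *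
      ∏ k ∈ Finset.Icc 1 n, (Polynomial.X + Polynomial.C (h k)))) * key

/-- For `g = 1`: `P_n^{1,h}(x) = (∏_{k=1}^n h(k))⁻¹ · ∏_{k=0}^{n-1} (x + h(k))`,
with the convention `h(0) := 0`. -/
theorem P_one_h (h : ℕ → ℝ) (hh : h 1 = 1) (hnv : ∀ k, 1 ≤ k → h k ≠ 0)
    (n : ℕ) (hn : 1 ≤ n) :
    Ppoly (fun _ => 1) h n =
      Polynomial.C (∏ k ∈ Finset.Icc 1 n, h k)⁻¹ *
        ∏ k ∈ Finset.range n, (Polynomial.X + Polynomial.C (hExt h k)) := by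
  obtain ⟨m, rfl⟩ : ∃ m, n = m + 1 := ⟨n - 1, by omega⟩
  rw [Ppoly]
  have hre : ∑ k ∈ Finset.range (m+1),
      Polynomial.C ((fun _ => (1:ℝ)) (k+1)) * Ppoly (fun _ => 1) h (m - k)
      = ∑ j ∈ Finset.range (m+1), Ppoly (fun _ => 1) h j := by
    rw [← Finset.sum_range_reflect]
    apply Finset.sum_congr rfl
    intro k hk
    simp only [Finset.mem_range] at hk
    simp only [map_one, one_mul]
    congr 1
    omega
  rw [hre, sumP h hnv m]
  rw [Finset.prod_range_succ', Finset.prod_Icc_succ_top (by omega : 1 ≤ m+1)]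
  have h0 : hExt h 0 = 0 := rfl
  have hE : ∀ k ∈ Finset.range m, Polynomial.X + Polynomial.C (hExt h (k+1))
      = Polynomial.X + Polynomial.C (h (k+1)) := by
    intro k _; simp [hExt]
  rw [Finset.prod_congr rfl hE, h0]
  have hIr : ∏ k ∈ Finset.Icc 1 m, (Polynomial.X + Polynomial.C (h k))
      = ∏ k ∈ Finset.range m, (Polynomial.X + Polynomial.C (h (k+1))) := by
    rw [← Finset.Ico_add_one_right_eq_Icc, Finset.prod_Ico_eq_prod_range]
    simp [add_comm]
  rw [mul_inv, map_mul, hIr]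
  simp only [map_zero, add_zero]
  ring
end
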